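/- Let b : B → ℝ be such that there exists at least one hive whose restriction to B equals b. Then there exists a hive h with restriction b to B such that h has no increasable subsets. -/

import Mathlib

open Classical

/-- A labeling of the triangular array of hive vertices `{(i,j) : i + j ≤ n}` is a hive
if all three types of rhombus inequalities hold. -/
def IsHive {α : Type*} [Ring α] [LinearOrder α] [IsStrictOrderedRing α] (n : ℕ) (h : ℕ → ℕ → α) : Prop :=
  ∀ i j : ℕ, i + j + 2 ≤ n →
    h i j + h (i+1) (j+1) ≤ h (i+1) j + h i (j+1) ∧
    h i (j+1) + h (i+2) j ≤ h (i+1) j + h (i+1) (j+1) ∧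
    h (i+1) j + h i (j+2) ≤ h i (j+1) + h (i+1) (j+1)

/-- `(i,j)` is a border vertex of the hive triangle of size `n`. -/
def InBorder (n i j : ℕ) : Prop := i + j ≤ n ∧ (i = 0 ∨ j = 0 ∨ i + j = n)

/-- A nonempty set `S` of interior hive vertices is increasable for the hive `h` if all
labels on `S` can be raised by the same small positive `ε` so that the result is still a
hive. -/
def Increasable (n : ℕ) (h : ℕ → ℕ → ℝ) (S : Set (ℕ × ℕ)) : Prop :=
  S.Nonempty ∧ (∀ p ∈ S, 1 ≤ p.1 ∧ 1 ≤ p.2 ∧ p.1 + p.2 < n) ∧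
  ∃ ε : ℝ, 0 < ε ∧
    IsHive n (fun i j => if (i, j) ∈ S then h i j + ε else h i j)

/-! ### Auxiliary lemmas -/

section Bounds

variable {n : ℕ} {g : ℕ → ℕ → ℝ}

/-- Horizontal differences decrease along a column: comparison with row 0. -/
lemma hive_d_le_row0 (hg : IsHive n g) (i j : ℕ) (h : i + 1 + j ≤ n) :
    g (i+1) j - g i j ≤ g (i+1) 0 - g i 0 := by
  induction j with
  | zero => exact le_rfl
  | succ j ih =>
    have hr := (hg i j (by omega)).1
    have h2 := ih (by omega)
    linarith

/-- Upper bound for hive entries in terms of the border. -/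
lemma hive_upper (hg : IsHive n g) (i j : ℕ) (hij : i + j ≤ n) :
    g i j ≤ g 0 j + g i 0 - g 0 0 := by
  induction i with
  | zero => linarith
  | succ i ih =>
    have h1 := hive_d_le_row0 hg i j (by omega)
    have h2 := ih (by omega)
    linarith

lemma hive_lower_aux (hg : IsHive n g) (i j : ℕ) (m : ℕ) (h : i + m + j ≤ n) :
    g (i+m) j - g (i+m) 0 ≤ g i j - g i 0 := by
  induction m with
  | zero => simp
  | succ m ih =>
    have h1 := hive_d_le_row0 hg (i+m) j (by omega)
    have h2 := ih (by omega)
    show g (i+m+1) j - g (i+m+1) 0 ≤ g i j - g i 0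
    linarith

/-- Lower bound for hive entries in terms of the border. -/
lemma hive_lower (hg : IsHive n g) (i j : ℕ) (hij : i + j ≤ n) :
    g (n-j) j - g (n-j) 0 + g i 0 ≤ g i j := by
  have h := hive_lower_aux hg i j (n - j - i) (by omega)
  have hnj : i + (n - j - i) = n - j := by omega
  rw [hnj] at h
  linarith

end Bounds

/-- Extension of a finitely supported coordinate vector to a function `ℕ → ℕ → ℝ`. -/
noncomputable def extF (n : ℕ) (f : Fin (n+1) × Fin (n+1) → ℝ) : ℕ → ℕ → ℝ :=
  fun i j => if h : i ≤ n ∧ j ≤ n then f (⟨i, by omega⟩, ⟨j, by omega⟩) else 0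

lemma extF_apply (n : ℕ) (f : Fin (n+1) × Fin (n+1) → ℝ) (p : Fin (n+1) × Fin (n+1)) :
    extF n f p.1 p.2 = f p := by
  have h1 : (p.1 : ℕ) ≤ n := Nat.lt_succ_iff.mp p.1.isLt
  have h2 : (p.2 : ℕ) ≤ n := Nat.lt_succ_iff.mp p.2.isLt
  simp only [extF, dif_pos (And.intro h1 h2)]

lemma continuous_extF (n a c : ℕ) :
    Continuous fun f : Fin (n+1) × Fin (n+1) → ℝ => extF n f a c := by
  unfold extF
  by_cases h : a ≤ n ∧ c ≤ n
  · simp only [dif_pos h]; exact continuous_apply _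
  · simp only [dif_neg h]; exact continuous_const

/-- If the hive polytope over a border `b` is nonempty, then it contains a hive with no
increasable subsets. -/
theorem exists_hive_no_increasable (n : ℕ) (hn : 1 ≤ n) (b : ℕ → ℕ → ℝ)
    (hex : ∃ g : ℕ → ℕ → ℝ, IsHive n g ∧ ∀ i j, InBorder n i j → g i j = b i j) :
    ∃ h : ℕ → ℕ → ℝ, IsHive n h ∧ (∀ i j, InBorder n i j → h i j = b i j) ∧
      ∀ S : Set (ℕ × ℕ), ¬ Increasable n h S := by
  classical
  set X := Fin (n+1) × Fin (n+1)
  set K : Set (X → ℝ) :=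
    {f | IsHive n (extF n f) ∧ (∀ i j, InBorder n i j → extF n f i j = b i j) ∧
      (∀ p : X, n < (p.1 : ℕ) + (p.2 : ℕ) → f p = 0)} with hKdef
  -- K is nonempty
  obtain ⟨g, hg, hgb⟩ := hex
  have extF_eq : ∀ (h' : ℕ → ℕ → ℝ) (i j : ℕ), i + j ≤ n →
      extF n (fun p : X => if (p.1 : ℕ) + (p.2 : ℕ) ≤ n then h' p.1 p.2 else 0) i j
        = h' i j := by
    intro h' i j hij
    have h1 : i ≤ n := by omega
    have h2 : j ≤ n := by omega
    simp [extF, h1, h2, hij]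
  have hKne : K.Nonempty := by
    refine ⟨fun p : X => if (p.1 : ℕ) + (p.2 : ℕ) ≤ n then g p.1 p.2 else 0, ?_, ?_, ?_⟩
    · intro i j hij
      rw [extF_eq g i j (by omega), extF_eq g (i+1) (j+1) (by omega),
        extF_eq g (i+1) j (by omega), extF_eq g i (j+1) (by omega),
        extF_eq g (i+2) j (by omega), extF_eq g i (j+2) (by omega)]
      exact hg i j hij
    · intro i j hb
      rw [extF_eq g i j hb.1]
      exact hgb i j hb
    · intro p hp
      simp [not_le.mpr hp]
  -- K is closed
  have hKclosed : IsClosed K := by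
    have hA : IsClosed {f : X → ℝ | IsHive n (extF n f)} := by
      have hrw : {f : X → ℝ | IsHive n (extF n f)} =
          ⋂ (q : ℕ × ℕ) (_ : q.1 + q.2 + 2 ≤ n),
            ({f : X → ℝ | extF n f q.1 q.2 + extF n f (q.1+1) (q.2+1) ≤
                extF n f (q.1+1) q.2 + extF n f q.1 (q.2+1)} ∩
             ({f : X → ℝ | extF n f q.1 (q.2+1) + extF n f (q.1+2) q.2 ≤
                extF n f (q.1+1) q.2 + extF n f (q.1+1) (q.2+1)} ∩
              {f : X → ℝ | extF n f (q.1+1) q.2 + extF n f q.1 (q.2+2) ≤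
                extF n f q.1 (q.2+1) + extF n f (q.1+1) (q.2+1)})) := by
        ext f
        simp only [Set.mem_iInter, Set.mem_inter_iff, Set.mem_setOf_eq]
        constructor
        · intro h q hq
          exact ⟨(h q.1 q.2 hq).1, (h q.1 q.2 hq).2.1, (h q.1 q.2 hq).2.2⟩
        · intro h i j hij
          exact ⟨((h (i, j)) hij).1, ((h (i, j)) hij).2.1, ((h (i, j)) hij).2.2⟩
      rw [hrw]
      refine isClosed_iInter fun q => isClosed_iInter fun _ => ?_
      refine IsClosed.inter ?_ (IsClosed.inter ?_ ?_) <;>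
        exact isClosed_le (by exact (continuous_extF _ _ _).add (continuous_extF _ _ _))
          (by exact (continuous_extF _ _ _).add (continuous_extF _ _ _))
    have hB : IsClosed {f : X → ℝ | ∀ i j, InBorder n i j → extF n f i j = b i j} := by
      have hrw : {f : X → ℝ | ∀ i j, InBorder n i j → extF n f i j = b i j} =
          ⋂ (q : ℕ × ℕ) (_ : InBorder n q.1 q.2), {f : X → ℝ | extF n f q.1 q.2 = b q.1 q.2} := by
        ext f
        simp only [Set.mem_iInter, Set.mem_setOf_eq]
        exact ⟨fun h q hq => h q.1 q.2 hq, fun h i j hij => h (i, j) hij⟩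
      rw [hrw]
      exact isClosed_iInter fun q => isClosed_iInter fun _ =>
        isClosed_eq (continuous_extF _ _ _) continuous_const
    have hC : IsClosed {f : X → ℝ | ∀ p : X, n < (p.1 : ℕ) + (p.2 : ℕ) → f p = 0} := by
      have hrw : {f : X → ℝ | ∀ p : X, n < (p.1 : ℕ) + (p.2 : ℕ) → f p = 0} =
          ⋂ (p : X) (_ : n < (p.1 : ℕ) + (p.2 : ℕ)), {f : X → ℝ | f p = 0} := by
        ext f; simp [Set.mem_iInter]
      rw [hrw]
      exact isClosed_iInter fun p => isClosed_iInter fun _ =>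
        isClosed_eq (continuous_apply _) continuous_const
    have : K = {f : X → ℝ | IsHive n (extF n f)} ∩
        ({f : X → ℝ | ∀ i j, InBorder n i j → extF n f i j = b i j} ∩
         {f : X → ℝ | ∀ p : X, n < (p.1 : ℕ) + (p.2 : ℕ) → f p = 0}) := by
      ext f; simp only [hKdef, Set.mem_setOf_eq, Set.mem_inter_iff]
    rw [this]
    exact hA.inter (hB.inter hC)
  -- K is bounded
  have hKbdd : Bornology.IsBounded K := by
    rw [isBounded_iff_forall_norm_le]
    set bnd : X → ℝ := fun q =>
      |b 0 (q.2 : ℕ)| + |b (q.1 : ℕ) 0| + |b 0 0| + |b (n - (q.2 : ℕ)) (q.2 : ℕ)| +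
        |b (n - (q.2 : ℕ)) 0| with hbnd
    have hbnd_nonneg : ∀ q : X, 0 ≤ bnd q := by
      intro q
      have := abs_nonneg (b 0 (q.2 : ℕ))
      have := abs_nonneg (b (q.1 : ℕ) 0)
      have := abs_nonneg (b 0 0)
      have := abs_nonneg (b (n - (q.2 : ℕ)) (q.2 : ℕ))
      have := abs_nonneg (b (n - (q.2 : ℕ)) 0)
      simp only [hbnd]; linarith
    refine ⟨∑ q : X, bnd q, fun f hf => ?_⟩
    have hCnn : (0 : ℝ) ≤ ∑ q : X, bnd q := Finset.sum_nonneg fun q _ => hbnd_nonneg q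
    rw [pi_norm_le_iff_of_nonneg hCnn]
    intro p
    have hle : bnd p ≤ ∑ q : X, bnd q :=
      Finset.single_le_sum (fun q _ => hbnd_nonneg q) (Finset.mem_univ p)
    rw [Real.norm_eq_abs]
    refine le_trans ?_ hle
    obtain ⟨hfH, hfB, hfZ⟩ := hf
    by_cases hp : (p.1 : ℕ) + (p.2 : ℕ) ≤ n
    · set i := (p.1 : ℕ); set j := (p.2 : ℕ)
      have hfp : f p = extF n f i j := (extF_apply n f p).symm
      have hb0j : extF n f 0 j = b 0 j := hfB 0 j ⟨by omega, Or.inl rfl⟩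
      have hbi0 : extF n f i 0 = b i 0 := hfB i 0 ⟨by omega, Or.inr (Or.inl rfl)⟩
      have hb00 : extF n f 0 0 = b 0 0 := hfB 0 0 ⟨by omega, Or.inl rfl⟩
      have hbnj : extF n f (n-j) j = b (n-j) j := hfB (n-j) j ⟨by omega, Or.inr (Or.inr (by omega))⟩
      have hbn0 : extF n f (n-j) 0 = b (n-j) 0 := hfB (n-j) 0 ⟨by omega, Or.inr (Or.inl rfl)⟩
      have hup := hive_upper hfH i j hp
      have hlo := hive_lower hfH i j hp
      rw [hb0j, hbi0, hb00] at hup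
      rw [hbnj, hbn0, hbi0] at hlo
      rw [hfp]
      rw [abs_le]
      constructor
      · have h1 := le_abs_self (b 0 j)
        have h2 := le_abs_self (b i 0)
        have h3 := le_abs_self (b 0 0)
        have h4 := neg_abs_le (b (n-j) j)
        have h5 := neg_abs_le (b (n-j) 0)
        have h6 := neg_abs_le (b i 0)
        have h7 := le_abs_self (b (n-j) 0)
        have h8 := abs_nonneg (b 0 j)
        have h9 := abs_nonneg (b 0 0)
        simp only [hbnd]
        linarith
      · have h1 := le_abs_self (b 0 j)
        have h2 := le_abs_self (b i 0)
        have h3 := neg_abs_le (b 0 0)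
        have h4 := abs_nonneg (b (n-j) j)
        have h5 := abs_nonneg (b (n-j) 0)
        simp only [hbnd]
        linarith
    · rw [hfZ p (by omega)]
      simpa using hbnd_nonneg p
  -- maximizer
  have hKcompact : IsCompact K := Metric.isCompact_of_isClosed_isBounded hKclosed hKbdd
  obtain ⟨h0, h0K, hmax⟩ := hKcompact.exists_isMaxOn hKne
    (Continuous.continuousOn (continuous_finset_sum _ fun p _ => continuous_apply p) :
      ContinuousOn (fun f : X → ℝ => ∑ p : X, f p) K)
  obtain ⟨h0H, h0B, h0Z⟩ := h0K
  refine ⟨extF n h0, h0H, h0B, ?_⟩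
  rintro S ⟨⟨q, hqS⟩, hSint, ε, hε, hhive⟩
  set h' : ℕ → ℕ → ℝ :=
    fun i j => if (i, j) ∈ S then extF n h0 i j + ε else extF n h0 i j with hh'
  set f' : X → ℝ := fun p => if (p.1 : ℕ) + (p.2 : ℕ) ≤ n then h' p.1 p.2 else 0 with hf'
  have hext : ∀ i j : ℕ, i + j ≤ n → extF n f' i j = h' i j := extF_eq h'
  have hf'K : f' ∈ K := by
    refine ⟨?_, ?_, ?_⟩
    · intro i j hij
      rw [hext i j (by omega), hext (i+1) (j+1) (by omega), hext (i+1) j (by omega),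
        hext i (j+1) (by omega), hext (i+2) j (by omega), hext i (j+2) (by omega)]
      exact hhive i j hij
    · intro i j hb
      rw [hext i j hb.1]
      have hnS : (i, j) ∉ S := by
        intro hmem
        have := hSint (i, j) hmem
        obtain ⟨h1, h2, h3⟩ := this
        rcases hb.2 with h | h | h <;> omega
      simp only [hh', if_neg hnS]
      exact h0B i j hb
    · intro p hp
      simp only [hf', if_neg (by omega : ¬ ((p.1 : ℕ) + (p.2 : ℕ) ≤ n))]
  have hle := hmax hf'K
  have hlt : ∑ p : X, h0 p < ∑ p : X, f' p := by
    refine Finset.sum_lt_sum (fun p _ => ?_) ?_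
    · by_cases hp : (p.1 : ℕ) + (p.2 : ℕ) ≤ n
      · have h1 : f' p = h' p.1 p.2 := by simp only [hf', if_pos hp]
        have h2 : h0 p = extF n h0 p.1 p.2 := (extF_apply n h0 p).symm
        rw [h1, h2, hh']
        by_cases hmem : ((p.1 : ℕ), (p.2 : ℕ)) ∈ S
        · simp only [if_pos hmem]; linarith
        · simp only [if_neg hmem]
          exact le_rfl
      · rw [h0Z p (by omega)]
        simp only [hf', if_neg hp]
        exact le_rfl
    · have hq := hSint q hqS
      obtain ⟨hq1, hq2, hq3⟩ := hq
      refine ⟨(⟨q.1, by omega⟩, ⟨q.2, by omega⟩), Finset.mem_univ _, ?_⟩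
      have h2 : h0 ((⟨q.1, by omega⟩ : Fin (n+1)), (⟨q.2, by omega⟩ : Fin (n+1)))
          = extF n h0 q.1 q.2 := (extF_apply n h0 (⟨q.1, by omega⟩, ⟨q.2, by omega⟩)).symm
      have h3 : f' ((⟨q.1, by omega⟩ : Fin (n+1)), (⟨q.2, by omega⟩ : Fin (n+1)))
          = extF n h0 q.1 q.2 + ε := by
        show (if q.1 + q.2 ≤ n then h' q.1 q.2 else 0) = _
        rw [if_pos (by omega : q.1 + q.2 ≤ n)]
        show (if (q.1, q.2) ∈ S then extF n h0 q.1 q.2 + ε else extF n h0 q.1 q.2) = _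
        rw [if_pos (show (q.1, q.2) ∈ S from hqS)]
      rw [h2, h3]
      linarith
  exact absurd hle (not_le.mpr hlt)
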